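/- Let φ̄ ∈ X, δ > 0, τ > 1, and let yᵟ ∈ Y satisfy ‖yᵟ − L φ̄‖ ≤ δ. Suppose φ : [0,∞) → X is differentiable, satisfies the noisy-data flow φ'(t) = −L*(L φ(t) − yᵟ) for all t ≥ 0, and suppose T ≥ 0 is such that ‖L φ(t) − yᵟ‖ > τ δ for all t ∈ [0,T). Then the accumulated residual obeys 2 (1 − 1/τ) ∫₀ᵀ ‖L φ(t) − yᵟ‖² dt ≤ ‖φ(0) − φ̄‖², and moreover ‖φ(t) − φ̄‖ ≤ ‖φ(0) − φ̄‖ for every t ∈ [0,T]. -/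

import Mathlib

open MeasureTheory intervalIntegral

/-- Noisy-data flow, `‖yᵟ − L φ̄‖ ≤ δ`, `τ > 1`: if the residual
exceeds `τ δ` on `[0,T)`, then `2(1 − 1/τ)∫₀ᵀ ‖L φ(t) − yᵟ‖² dt ≤ ‖φ(0) − φ̄‖²`,
and `‖φ(t) − φ̄‖ ≤ ‖φ(0) − φ̄‖` for every `t ∈ [0,T]`. -/
theorem noisy_flow_accumulated_residual_bound
    {X Y : Type*}
    [NormedAddCommGroup X] [InnerProductSpace ℝ X] [CompleteSpace X]
    [NormedAddCommGroup Y] [InnerProductSpace ℝ Y] [CompleteSpace Y]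
    (L : X →L[ℝ] Y) (φbar : X) (δ τ : ℝ) (hδ : 0 < δ) (hτ : 1 < τ)
    (yδ : Y) (hnoise : ‖yδ - L φbar‖ ≤ δ) (φ : ℝ → X)
    (hflow : ∀ t : ℝ, 0 ≤ t →
      HasDerivAt φ (-(L.adjoint (L (φ t) - yδ))) t)
    (T : ℝ) (hT : 0 ≤ T)
    (hres : ∀ t ∈ Set.Ico (0:ℝ) T, τ * δ < ‖L (φ t) - yδ‖) :
    2 * (1 - 1/τ) * (∫ t in (0:ℝ)..T, ‖L (φ t) - yδ‖ ^ 2) ≤ ‖φ 0 - φbar‖ ^ 2 ∧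
    ∀ t ∈ Set.Icc (0:ℝ) T, ‖φ t - φbar‖ ≤ ‖φ 0 - φbar‖ := by
  set r : ℝ → Y := fun t => L (φ t) - yδ with hr
  set g' : ℝ → ℝ := fun t => -2 * (inner ℝ (r t) (L (φ t) - L φbar) : ℝ) with hg'def
  -- derivative of ‖φ t - φbar‖²
  have hg : ∀ t : ℝ, 0 ≤ t →
      HasDerivAt (fun s => ‖φ s - φbar‖ ^ 2) (g' t) t := by
    intro t ht
    have hd : HasDerivAt (fun s => φ s - φbar) (-(L.adjoint (r t))) t :=
      (hflow t ht).sub_const φbar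
    have h1 := hd.inner ℝ hd
    have heq : (fun s => (inner ℝ (φ s - φbar) (φ s - φbar) : ℝ)) =
        fun s => ‖φ s - φbar‖ ^ 2 := by
      funext s; rw [real_inner_self_eq_norm_sq]
    rw [heq] at h1
    refine h1.congr_deriv ?_
    have h2 : (inner ℝ (L.adjoint (r t)) (φ t - φbar) : ℝ) = inner ℝ (r t) (L (φ t - φbar)) :=
      ContinuousLinearMap.adjoint_inner_left L _ _
    have h3 : (inner ℝ (φ t - φbar) ((ContinuousLinearMap.adjoint L) (r t)) : ℝ) =
        inner ℝ (r t) (L (φ t) - L φbar) := by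
      rw [real_inner_comm, h2, map_sub]
    simp only [hg'def, inner_neg_left, inner_neg_right, h3]
    rw [h2, map_sub]
    ring
  -- continuity of φ on [0, ∞)
  have hφc : ∀ t : ℝ, 0 ≤ t → ContinuousAt φ t := fun t ht => (hflow t ht).continuousAt
  have hg'cont : ∀ t : ℝ, 0 ≤ t → ContinuousAt g' t := by
    intro t ht
    have hφ := hφc t ht
    have hLφ : ContinuousAt (fun s => L (φ s)) t := L.continuous.continuousAt.comp hφ
    exact continuousAt_const.mul ((hLφ.sub continuousAt_const).inner
      (hLφ.sub continuousAt_const))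
  have hrcont : ∀ t : ℝ, 0 ≤ t → ContinuousAt (fun s => ‖r s‖ ^ 2) t := by
    intro t ht
    have hφ := hφc t ht
    have hLφ : ContinuousAt (fun s => L (φ s)) t := L.continuous.continuousAt.comp hφ
    exact ((hLφ.sub continuousAt_const).norm.pow 2)
  have hτ0 : (0:ℝ) < τ := lt_trans one_pos hτ
  have hc : 0 < 2 * (1 - 1/τ) := by
    have : 1/τ < 1 := by rw [div_lt_one hτ0]; exact hτ
    linarith
  -- pointwise bound on Ico 0 T
  have hbound : ∀ t ∈ Set.Ico (0:ℝ) T, g' t ≤ -(2 * (1 - 1/τ)) * ‖r t‖ ^ 2 := by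
    intro t htm
    have hres' := hres t htm
    have hrpos : 0 < ‖r t‖ := lt_trans (by positivity) hres'
    have hsplit : L (φ t) - L φbar = r t + (yδ - L φbar) := by
      simp only [hr]; abel
    have : g' t = -2 * ‖r t‖ ^ 2 - 2 * (inner ℝ (r t) (yδ - L φbar) : ℝ) := by
      simp only [hg'def]
      rw [hsplit, inner_add_right, real_inner_self_eq_norm_sq]; ring
    rw [this]
    have hcs : (inner ℝ (r t) (yδ - L φbar) : ℝ) ≥ -(‖r t‖ * δ) := by
      have := abs_real_inner_le_norm (r t) (yδ - L φbar)
      have h2 : ‖r t‖ * ‖yδ - L φbar‖ ≤ ‖r t‖ * δ :=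
        mul_le_mul_of_nonneg_left hnoise (norm_nonneg _)
      nlinarith [neg_abs_le (inner ℝ (r t) (yδ - L φbar) : ℝ)]
    have hδr : δ ≤ ‖r t‖ / τ := by
      rw [le_div_iff₀ hτ0]; nlinarith
    have h3 : ‖r t‖ * δ ≤ ‖r t‖ ^ 2 / τ := by
      calc ‖r t‖ * δ ≤ ‖r t‖ * (‖r t‖ / τ) :=
            mul_le_mul_of_nonneg_left hδr (norm_nonneg _)
        _ = ‖r t‖ ^ 2 / τ := by ring
    have hkey : -(2 * (1 - 1/τ)) * ‖r t‖ ^ 2 = -2 * ‖r t‖ ^ 2 + 2 * (‖r t‖ ^ 2 / τ) := by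
      ring
    linarith
  -- auxiliary: a.e. everything except T
  have haeT : ∀ᵐ x : ℝ, x ≠ T := by
    rw [ae_iff]
    have : {x : ℝ | ¬ x ≠ T} = {T} := by ext x; simp
    rw [this]; exact Real.volume_singleton
  -- FTC on [0, t] for t ∈ [0, T]
  have hftc : ∀ t ∈ Set.Icc (0:ℝ) T,
      ‖φ t - φbar‖ ^ 2 - ‖φ 0 - φbar‖ ^ 2 = ∫ s in (0:ℝ)..t, g' s := by
    intro t htm
    have huIcc : Set.uIcc (0:ℝ) t = Set.Icc 0 t := Set.uIcc_of_le htm.1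
    refine (intervalIntegral.integral_eq_sub_of_hasDerivAt
      (fun s hs => hg s (huIcc ▸ hs : s ∈ Set.Icc 0 t).1) ?_).symm
    apply ContinuousOn.intervalIntegrable
    intro s hs
    exact ((hg'cont s (huIcc ▸ hs : s ∈ Set.Icc 0 t).1).continuousWithinAt)
  have hint : ∀ t ∈ Set.Icc (0:ℝ) T, IntervalIntegrable g' volume 0 t := by
    intro t htm
    apply ContinuousOn.intervalIntegrable
    intro s hs
    rw [Set.uIcc_of_le htm.1] at hs
    exact (hg'cont s hs.1).continuousWithinAt
  have hrint : ∀ t ∈ Set.Icc (0:ℝ) T,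
      IntervalIntegrable (fun s => -(2 * (1 - 1/τ)) * ‖r s‖ ^ 2) volume 0 t := by
    intro t htm
    apply ContinuousOn.intervalIntegrable
    intro s hs
    rw [Set.uIcc_of_le htm.1] at hs
    exact (continuousAt_const.mul (hrcont s hs.1)).continuousWithinAt
  constructor
  · -- integral bound
    have hmono : (∫ s in (0:ℝ)..T, g' s) ≤
        ∫ s in (0:ℝ)..T, -(2 * (1 - 1/τ)) * ‖r s‖ ^ 2 := by
      refine intervalIntegral.integral_mono_ae_restrict hT
        (hint T ⟨hT, le_refl T⟩) (hrint T ⟨hT, le_refl T⟩) ?_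
      have h1 : ∀ᵐ x ∂(volume.restrict (Set.Icc (0:ℝ) T)), x ≠ T :=
        ae_restrict_of_ae haeT
      have h2 : ∀ᵐ x ∂(volume.restrict (Set.Icc (0:ℝ) T)), x ∈ Set.Icc (0:ℝ) T :=
        ae_restrict_mem measurableSet_Icc
      filter_upwards [h1, h2] with x hx hxm
      exact hbound x ⟨hxm.1, lt_of_le_of_ne hxm.2 hx⟩
    have hftcT := hftc T ⟨hT, le_refl T⟩
    have hconst : (∫ s in (0:ℝ)..T, -(2 * (1 - 1/τ)) * ‖r s‖ ^ 2) =
        -(2 * (1 - 1/τ)) * ∫ s in (0:ℝ)..T, ‖r s‖ ^ 2 :=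
      intervalIntegral.integral_const_mul _ _
    have hnn : 0 ≤ ‖φ T - φbar‖ ^ 2 := by positivity
    rw [hconst] at hmono
    rw [hr] at hmono
    nlinarith [hftcT]
  · -- monotonicity of the error
    intro t htm
    have hftct := hftc t htm
    have hle : (∫ s in (0:ℝ)..t, g' s) ≤ 0 := by
      have : (∫ s in (0:ℝ)..t, g' s) ≤ ∫ s in (0:ℝ)..t, (0:ℝ) := by
        refine intervalIntegral.integral_mono_ae_restrict htm.1
          (hint t htm) intervalIntegrable_const ?_
        have h1 : ∀ᵐ x ∂(volume.restrict (Set.Icc (0:ℝ) t)), x ≠ T :=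
          ae_restrict_of_ae haeT
        have h2 : ∀ᵐ x ∂(volume.restrict (Set.Icc (0:ℝ) t)), x ∈ Set.Icc (0:ℝ) t :=
          ae_restrict_mem measurableSet_Icc
        filter_upwards [h1, h2] with x hx hxm
        have hx' : x ∈ Set.Ico (0:ℝ) T :=
          ⟨hxm.1, lt_of_le_of_ne (le_trans hxm.2 htm.2) hx⟩
        have := hbound x hx'
        have : g' x ≤ 0 := le_trans this (by nlinarith [sq_nonneg ‖r x‖, hc])
        exact this
      simpa using this
    have hsq : ‖φ t - φbar‖ ^ 2 ≤ ‖φ 0 - φbar‖ ^ 2 := by linarith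
    exact (pow_le_pow_iff_left₀ (norm_nonneg _) (norm_nonneg _) two_ne_zero).mp hsq
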